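/- Let M ≥ 2 be an integer and let g > 0, ρ > 0. Let E and S be independent real random variables on a probability space, where E has the exponential distribution with rate 1 and S has the Gamma distribution with shape M−1 and rate 1. Then for every x > 0, P( E / ((gρ)^{-1} + S) ≤ x ) = 1 − e^{−x/(gρ)} / (1+x)^{M−1}. -/

import Mathlib

open MeasureTheory ProbabilityTheory Real

/-- The conditional beam SINR distribution given path loss `g`: if `E ~ Exp(1)` and
`S ~ Gamma(M-1, 1)` are independent, then for `x > 0`,
`P(E / ((gρ)⁻¹ + S) ≤ x) = 1 - exp(-x/(gρ)) / (1+x)^(M-1)`. -/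
theorem beam_sinr_cdf_given_pathloss
    {Ω : Type*} [MeasurableSpace Ω] (P : Measure Ω) [IsProbabilityMeasure P]
    (M : ℕ) (hM : 2 ≤ M) (g ρ : ℝ) (hg : 0 < g) (hρ : 0 < ρ)
    (E S : Ω → ℝ) (hEm : Measurable E) (hSm : Measurable S)
    (hindep : IndepFun E S P)
    (hE : P.map E = expMeasure 1)
    (hS : P.map S = gammaMeasure ((M : ℝ) - 1) 1) :
    ∀ x : ℝ, 0 < x →
      (P {ω | E ω / ((g * ρ)⁻¹ + S ω) ≤ x}).toReal
        = 1 - Real.exp (-x / (g * ρ)) / (1 + x) ^ (M - 1) := by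
  intro x hx
  set c : ℝ := (g * ρ)⁻¹ with hcdef
  have hc : 0 < c := by positivity
  set a : ℝ := (M : ℝ) - 1 with hadef
  have haM : a = ((M - 1 : ℕ) : ℝ) := by
    rw [Nat.cast_sub (by omega), Nat.cast_one]
  have ha : 0 < a := by
    have : (2 : ℝ) ≤ (M : ℝ) := by exact_mod_cast hM
    simp only [hadef]; linarith
  set μS : Measure ℝ := gammaMeasure a 1 with hμS
  have hprobS : IsProbabilityMeasure μS := isProbabilityMeasure_gammaMeasure ha one_pos
  have hprobE : IsProbabilityMeasure (expMeasure 1) := isProbabilityMeasure_expMeasure one_pos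
  have h1x : (0:ℝ) < 1 + x := by linarith
  -- S is a.e. nonnegative
  have hμS_neg : μS (Set.Iio 0) = 0 := by
    rw [hμS, gammaMeasure, withDensity_apply _ measurableSet_Iio,
      lintegral_gammaPDF_of_nonpos le_rfl]
  have hS_nonneg : ∀ᵐ ω ∂P, 0 ≤ S ω := by
    rw [ae_iff]
    have : {ω | ¬ 0 ≤ S ω} = S ⁻¹' Set.Iio 0 := by ext ω; simp [not_le]
    rw [this, ← Measure.map_apply hSm measurableSet_Iio, hS]
    exact hμS_neg
  -- rewrite the event
  have hev : P {ω | E ω / (c + S ω) ≤ x} = P {ω | E ω ≤ x * (c + S ω)} := by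
    apply measure_congr
    filter_upwards [hS_nonneg] with ω hω
    have hpos : 0 < c + S ω := by linarith
    show (E ω / (c + S ω) ≤ x) = (E ω ≤ x * (c + S ω))
    rw [eq_iff_iff, div_le_iff₀ hpos, mul_comm]
  -- joint law
  have hBmeas : MeasurableSet {p : ℝ × ℝ | p.2 ≤ x * (c + p.1)} :=
    measurableSet_le measurable_snd (by fun_prop)
  have hmap : P.map (fun ω => (S ω, E ω)) = μS.prod (expMeasure 1) := by
    rw [(indepFun_iff_map_prod_eq_prod_map_map hSm.aemeasurable hEm.aemeasurable).mp
      hindep.symm, hS, hE]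
  have hjoint : P {ω | E ω ≤ x * (c + S ω)}
      = ∫⁻ s, expMeasure 1 (Set.Iic (x * (c + s))) ∂μS := by
    have : {ω | E ω ≤ x * (c + S ω)}
        = (fun ω => (S ω, E ω)) ⁻¹' {p : ℝ × ℝ | p.2 ≤ x * (c + p.1)} := rfl
    rw [this, ← Measure.map_apply (hSm.prodMk hEm) hBmeas, hmap,
      Measure.prod_apply hBmeas]
    congr 1
  -- exponential CDF
  have hinner : ∀ s : ℝ, expMeasure 1 (Set.Iic (x * (c + s)))
      = ENNReal.ofReal (if 0 ≤ x * (c + s) then 1 - Real.exp (-(1 * (x * (c + s)))) else 0) := by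
    intro s
    rw [expMeasure, gammaMeasure, withDensity_apply _ measurableSet_Iic]
    exact lintegral_exponentialPDF_eq_antiDeriv one_pos _
  -- the a.e. rewrite of the integrand
  have hSae : ∀ᵐ s ∂μS, 0 ≤ s := by
    rw [ae_iff]
    have : {s : ℝ | ¬ 0 ≤ s} = Set.Iio 0 := by ext s; simp [not_le]
    rw [this, hμS_neg]
  set f : ℝ → ENNReal := fun s => ENNReal.ofReal (Real.exp (-(x * (c + s)))) with hfdef
  have hfm : Measurable f := by fun_prop
  have hfle : f ≤ᵐ[μS] fun _ => 1 := by
    filter_upwards [hSae] with s hs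
    simp only [hfdef]
    rw [← ENNReal.ofReal_one]
    apply ENNReal.ofReal_le_ofReal
    rw [← Real.exp_zero]
    exact Real.exp_le_exp.mpr (by nlinarith)
  have hfint : ∫⁻ s, f s ∂μS ≠ ⊤ := by
    refine ne_top_of_le_ne_top ?_ (lintegral_mono_ae hfle)
    simp
  have hstep : ∫⁻ s, expMeasure 1 (Set.Iic (x * (c + s))) ∂μS
      = 1 - ∫⁻ s, f s ∂μS := by
    have hcongr : ∫⁻ s, expMeasure 1 (Set.Iic (x * (c + s))) ∂μS
        = ∫⁻ s, ((fun _ => (1:ENNReal)) s - f s) ∂μS := by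
      apply lintegral_congr_ae
      filter_upwards [hSae] with s hs
      rw [hinner s]
      have h0 : 0 ≤ x * (c + s) := by nlinarith
      rw [if_pos h0, one_mul, ENNReal.ofReal_sub _ (Real.exp_nonneg _), ENNReal.ofReal_one]
    rw [hcongr, lintegral_sub hfm hfint hfle, lintegral_one, measure_univ]
  -- compute the key integral
  set k : ℝ := Real.exp (-(x * c)) / Real.Gamma a with hkdef
  set F : ℝ → ℝ := fun s => k * (s ^ (a - 1) * Real.exp (-((1 + x) * s))) with hFdef
  have hFint : IntegrableOn F (Set.Ioi 0) := by
    apply Integrable.const_mul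
    have h := integrableOn_rpow_mul_exp_neg_mul_rpow (p := 1) (s := a - 1) (b := 1 + x)
      (by linarith) one_pos h1x
    refine h.congr_fun (fun s _ => ?_) measurableSet_Ioi
    beta_reduce
    rw [Real.rpow_one, neg_mul]
  have hI : ∫⁻ s, f s ∂μS = ENNReal.ofReal (∫ s in Set.Ioi 0, F s) := by
    rw [hμS, gammaMeasure,
      lintegral_withDensity_eq_lintegral_mul _ (show Measurable (gammaPDF a 1) from (measurable_gammaPDFReal a 1).ennreal_ofReal) hfm]
    have heq : ∀ s : ℝ, (gammaPDF a 1 * f) s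
        = ENNReal.ofReal (Set.indicator (Set.Ici 0) F s) := by
      intro s
      simp only [Pi.mul_apply, hfdef, gammaPDF]
      rw [← ENNReal.ofReal_mul (gammaPDFReal_nonneg ha one_pos s)]
      congr 1
      rcases le_or_gt 0 s with hs | hs
      · rw [Set.indicator_of_mem (show s ∈ Set.Ici 0 from hs)]
        simp only [gammaPDFReal, if_pos hs, hFdef, hkdef]
        rw [Real.one_rpow, show -(x*(c+s)) = -(x*c) + -(x*s) by ring, Real.exp_add,
          show -((1+x)*s) = -(1*s) + -(x*s) by ring, Real.exp_add]
        ring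
      · rw [Set.indicator_of_notMem (by simpa using hs)]
        simp [gammaPDFReal, not_le.mpr hs]
    simp_rw [heq]
    rw [show (fun s => ENNReal.ofReal (Set.indicator (Set.Ici 0) F s))
        = Set.indicator (Set.Ici 0) (fun s => ENNReal.ofReal (F s)) from ?_]
    · rw [lintegral_indicator measurableSet_Ici,
        ← setLIntegral_congr (MeasureTheory.Ioi_ae_eq_Ici (a := (0:ℝ))),
        ← ofReal_integral_eq_lintegral_ofReal hFint]
      filter_upwards [ae_restrict_mem measurableSet_Ioi] with s hs
      have hs0 : (0:ℝ) < s := hs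
      simp only [hFdef, hkdef]
      positivity
    · ext s
      by_cases hs : s ∈ Set.Ici (0:ℝ) <;> simp [hs]
  -- evaluate the real integral
  have hval : ∫ s in Set.Ioi 0, F s = Real.exp (-(x * c)) / (1 + x) ^ (M - 1) := by
    simp only [hFdef]
    rw [MeasureTheory.integral_const_mul]
    have : ∫ s in Set.Ioi 0, s ^ (a - 1) * Real.exp (-((1 + x) * s))
        = (1 / (1 + x)) ^ a * Real.Gamma a := integral_rpow_mul_exp_neg_mul_Ioi ha h1x
    rw [this, hkdef]
    have hΓ : Real.Gamma a ≠ 0 := (Real.Gamma_pos_of_pos ha).ne'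
    have hpow : ((1:ℝ) / (1 + x)) ^ a = ((1 + x) ^ (M - 1) : ℝ)⁻¹ := by
      rw [one_div, ← Real.rpow_natCast (1 + x) (M - 1), ← haM, Real.inv_rpow h1x.le]
    rw [hpow]
    field_simp
  -- put it together
  have hP : P {ω | E ω / (c + S ω) ≤ x}
      = 1 - ENNReal.ofReal (Real.exp (-(x * c)) / (1 + x) ^ (M - 1)) := by
    rw [hev, hjoint, hstep, hI, hval]
  rw [hP]
  have hr0 : 0 ≤ Real.exp (-(x * c)) / (1 + x) ^ (M - 1) := by positivity
  have hr1 : Real.exp (-(x * c)) / (1 + x) ^ (M - 1) ≤ 1 := by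
    apply div_le_one_of_le₀ _ (by positivity)
    calc Real.exp (-(x * c)) ≤ Real.exp 0 := Real.exp_le_exp.mpr (by nlinarith)
    _ = 1 := Real.exp_zero
    _ ≤ (1 + x) ^ (M - 1) := one_le_pow₀ (by linarith)
  rw [ENNReal.toReal_sub_of_le (by simpa using ENNReal.ofReal_le_one.mpr hr1) ENNReal.one_ne_top,
    ENNReal.toReal_one, ENNReal.toReal_ofReal hr0]
  congr 2
  rw [hcdef]
  field_simp
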